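/- For every β > 1, Lebesgue measure on [0,1) is scaled by the β-transformation τ_β by the factor β, and it is the unique Borel probability measure on [0,1) that is scaled by τ_β by some factor s > 0. -/

import Mathlib

open Set MeasureTheory

noncomputable section

/-- The β-transformation `x ↦ βx mod 1` on `[0,1)`. -/
def betaMap (β : ℝ) (x : ℝ) : ℝ := Int.fract (β * x)

section Helpers

variable {β : ℝ} (hβ : 1 < β)

lemma betaMap_mem_Ico (β x : ℝ) : betaMap β x ∈ Set.Ico (0:ℝ) 1 :=
  ⟨Int.fract_nonneg _, Int.fract_lt_one _⟩

lemma betaMap_eq_of_branch (hβ0 : 0 < β) (k : ℤ) {x : ℝ} (h1 : (k:ℝ)/β ≤ x)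
    (h2 : x < ((k:ℝ)+1)/β) : betaMap β x = β * x - k := by
  have hk : (k:ℝ) ≤ β * x := by
    rw [div_le_iff₀ hβ0] at h1; linarith [h1]
  have hk' : β * x < (k:ℝ) + 1 := by
    rw [lt_div_iff₀ hβ0] at h2; linarith [h2]
  have hfl : ⌊β * x⌋ = k := by
    rw [Int.floor_eq_iff]; exact ⟨hk, hk'⟩
  simp [betaMap, Int.fract, hfl]

lemma betaMap_image_Ico (hβ0 : 0 < β) (k : ℤ) {a b : ℝ} (ha : (k:ℝ)/β ≤ a)
    (hb : b ≤ ((k:ℝ)+1)/β) :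
    betaMap β '' Set.Ico a b = Set.Ico (β*a - k) (β*b - k) := by
  have hcongr : betaMap β '' Set.Ico a b = (fun x => β * x + (-(k:ℝ))) '' Set.Ico a b := by
    apply Set.image_congr
    intro x hx
    rw [betaMap_eq_of_branch hβ0 k (ha.trans hx.1) (hx.2.trans_le hb)]
    ring
  rw [hcongr, Set.image_affine_Ico hβ0]
  congr 1 <;> ring

lemma betaMap_injOn_Ico (hβ0 : 0 < β) (k : ℤ) {a b : ℝ} (ha : (k:ℝ)/β ≤ a)
    (hb : b ≤ ((k:ℝ)+1)/β) : Set.InjOn (betaMap β) (Set.Ico a b) := by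
  intro x hx y hy hxy
  rw [betaMap_eq_of_branch hβ0 k (ha.trans hx.1) (hx.2.trans_le hb),
    betaMap_eq_of_branch hβ0 k (ha.trans hy.1) (hy.2.trans_le hb)] at hxy
  have : β * x = β * y := by linarith
  exact mul_left_cancel₀ hβ0.ne' this

lemma mem_branch (hβ0 : 0 < β) (x : ℝ) :
    (↑⌊β*x⌋:ℝ)/β ≤ x ∧ x < ((↑⌊β*x⌋:ℝ)+1)/β := by
  constructor
  · rw [div_le_iff₀ hβ0, mul_comm]; exact Int.floor_le _
  · rw [lt_div_iff₀ hβ0, mul_comm]; exact Int.lt_floor_add_one _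

/-- Part 1: Lebesgue measure is scaled by the factor β. -/
lemma lebesgue_scaled (hβ : 1 < β) :
    ∀ E : Set ℝ, E ⊆ Set.Ico (0 : ℝ) 1 → MeasurableSet E → Set.InjOn (betaMap β) E →
      (volume.restrict (Set.Ico (0:ℝ) 1)) (betaMap β '' E)
        = ENNReal.ofReal β * (volume.restrict (Set.Ico (0:ℝ) 1)) E := by
  intro E hE1 hEm hInj
  have hβ0 : (0:ℝ) < β := lt_trans one_pos hβ
  set Ek : ℤ → Set ℝ := fun k => E ∩ Set.Ico ((k:ℝ)/β) (((k:ℝ)+1)/β) with hEk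
  have hEkm : ∀ k, MeasurableSet (Ek k) := fun k => hEm.inter measurableSet_Ico
  have hcover : E = ⋃ k : ℤ, Ek k := by
    ext x
    simp only [hEk, Set.mem_iUnion, Set.mem_inter_iff]
    constructor
    · intro hx
      exact ⟨⌊β*x⌋, hx, (mem_branch hβ0 x).1, (mem_branch hβ0 x).2⟩
    · rintro ⟨k, hk, -⟩; exact hk
  have hbranch_sub : ∀ k, ∀ x ∈ Ek k, (k:ℝ)/β ≤ x ∧ x < ((k:ℝ)+1)/β := by
    intro k x hx; exact ⟨hx.2.1, hx.2.2⟩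
  have hdisjEk : Pairwise (Function.onFun Disjoint Ek) := by
    intro k l hkl
    rw [Function.onFun, Set.disjoint_left]
    rintro x ⟨-, hx1, hx2⟩ ⟨-, hy1, hy2⟩
    apply hkl
    have h1 : ⌊β * x⌋ = k := by
      rw [Int.floor_eq_iff]
      constructor
      · rw [div_le_iff₀ hβ0] at hx1; linarith
      · rw [lt_div_iff₀ hβ0] at hx2; linarith
    have h2 : ⌊β * x⌋ = l := by
      rw [Int.floor_eq_iff]
      constructor
      · rw [div_le_iff₀ hβ0] at hy1; linarith
      · rw [lt_div_iff₀ hβ0] at hy2; linarith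
    rw [← h1, h2]
  -- image pieces
  have himg : ∀ k : ℤ, betaMap β '' Ek k = (fun y => (y + (k:ℝ)) * β⁻¹) ⁻¹' (Ek k) := by
    intro k
    have hcongr : betaMap β '' Ek k = (fun x => β * x - (k:ℝ)) '' Ek k := by
      apply Set.image_congr
      intro x hx
      exact betaMap_eq_of_branch hβ0 k hx.2.1 hx.2.2
    rw [hcongr]
    refine congrFun (Set.image_eq_preimage_of_inverse ?_ ?_) (Ek k)
    · intro x; field_simp; ring
    · intro y; field_simp; ring
  have himg_meas : ∀ k : ℤ, MeasurableSet (betaMap β '' Ek k) := by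
    intro k
    rw [himg k]
    exact (hEkm k).preimage (by fun_prop)
  have himg_vol : ∀ k : ℤ, volume (betaMap β '' Ek k) = ENNReal.ofReal β * volume (Ek k) := by
    intro k
    rw [himg k]
    have : (fun y : ℝ => (y + (k:ℝ)) * β⁻¹) = (fun z : ℝ => z * β⁻¹) ∘ (fun y => y + (k:ℝ)) := rfl
    rw [this, Set.preimage_comp]
    rw [measure_preimage_add_right]
    rw [Real.volume_preimage_mul_right (inv_ne_zero hβ0.ne')]
    congr 1
    rw [inv_inv, abs_of_pos hβ0]
  have hIsub : betaMap β '' E ⊆ Set.Ico (0:ℝ) 1 := by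
    rintro y ⟨x, -, rfl⟩; exact betaMap_mem_Ico β x
  have hdisjimg : Pairwise (Function.onFun Disjoint (fun k => betaMap β '' Ek k)) := by
    intro k l hkl
    rw [Function.onFun, Set.disjoint_left]
    rintro y ⟨x, hx, rfl⟩ ⟨x', hx', hxx'⟩
    have hxE : x ∈ E := hx.1
    have hx'E : x' ∈ E := hx'.1
    have : x' = x := hInj hx'E hxE hxx'
    subst this
    exact (hdisjEk hkl).le_bot ⟨hx, hx'⟩ |>.elim
  -- compute
  rw [Measure.restrict_apply' measurableSet_Ico, Measure.restrict_apply' measurableSet_Ico,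
    Set.inter_eq_self_of_subset_left hIsub, Set.inter_eq_self_of_subset_left hE1]
  calc volume (betaMap β '' E) = volume (⋃ k : ℤ, betaMap β '' Ek k) := by
        rw [hcover, Set.image_iUnion]
    _ = ∑' k : ℤ, volume (betaMap β '' Ek k) := measure_iUnion hdisjimg himg_meas
    _ = ∑' k : ℤ, ENNReal.ofReal β * volume (Ek k) := by simp_rw [himg_vol]
    _ = ENNReal.ofReal β * ∑' k : ℤ, volume (Ek k) := ENNReal.tsum_mul_left
    _ = ENNReal.ofReal β * volume E := by
        rw [← measure_iUnion hdisjEk hEkm, ← hcover]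

end Helpers

section Uniqueness

/-- cumulative distribution on `[0,1)` -/
private def cdf (m : Measure ℝ) (x : ℝ) : ℝ := (m (Set.Ico 0 x)).toReal

set_option maxHeartbeats 1000000 in
lemma scaled_unique {β : ℝ} (hβ : 1 < β) (m : Measure ℝ) (s : ℝ) (hs : 0 < s)
    [IsProbabilityMeasure m] (h1 : m (Set.Ico (0:ℝ) 1) = 1)
    (hm : ∀ E : Set ℝ, E ⊆ Set.Ico (0 : ℝ) 1 → MeasurableSet E → Set.InjOn (betaMap β) E →
      m (betaMap β '' E) = ENNReal.ofReal s * m E) :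
    m = volume.restrict (Set.Ico (0 : ℝ) 1) := by
  have hβ0 : (0:ℝ) < β := lt_trans one_pos hβ
  have hFin : ∀ A : Set ℝ, m A ≠ ⊤ := fun A => measure_ne_top m A
  have hF0 : cdf m 0 = 0 := by simp [cdf]
  have hFnonneg : ∀ x, 0 ≤ cdf m x := fun x => ENNReal.toReal_nonneg
  have hFle1 : ∀ x : ℝ, cdf m x ≤ 1 := by
    intro x
    have h := measure_mono (μ := m) (Set.subset_univ (Set.Ico (0:ℝ) x))
    rw [measure_univ] at h
    have := ENNReal.toReal_mono (ENNReal.one_ne_top) h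
    simpa [cdf] using this
  have hsplit : ∀ a b c : ℝ, a ≤ b → b ≤ c →
      m (Set.Ico a c) = m (Set.Ico a b) + m (Set.Ico b c) := by
    intro a b c hab hbc
    rw [← Set.Ico_union_Ico_eq_Ico hab hbc,
      measure_union (Set.Ico_disjoint_Ico_same) measurableSet_Ico]
  have hscale : ∀ (k:ℤ) (a b : ℝ), 0 ≤ a → (k:ℝ)/β ≤ a → b ≤ ((k:ℝ)+1)/β → b ≤ 1 →
      m (Set.Ico (β*a-k) (β*b-k)) = ENNReal.ofReal s * m (Set.Ico a b) := by
    intro k a b ha0 hak hbk hb1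
    have := hm (Set.Ico a b) (fun x hx => ⟨le_trans ha0 hx.1, lt_of_lt_of_le hx.2 hb1⟩)
      measurableSet_Ico (betaMap_injOn_Ico hβ0 k hak hbk)
    rwa [betaMap_image_Ico hβ0 k hak hbk] at this
  have claimNat : ∀ j : ℕ, ((j:ℝ)) ≤ β → s * cdf m ((j:ℝ)/β) = j := by
    intro j
    induction j with
    | zero => intro _; simp [cdf]
    | succ n ih =>
      intro hle
      have hn1 : ((n:ℝ)) + 1 ≤ β := by push_cast at hle; linarith
      have ihn := ih (by linarith)
      have hb : m (Set.Ico (0:ℝ) 1) = ENNReal.ofReal s * m (Set.Ico ((n:ℝ)/β) (((n:ℝ)+1)/β)) := by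
        have h := hscale (n:ℤ) ((n:ℝ)/β) (((n:ℝ)+1)/β) (by positivity)
          (by push_cast; exact le_rfl) (by push_cast; exact le_rfl) (by rw [div_le_one hβ0]; linarith)
        have e1 : β*((n:ℝ)/β) - ((n:ℤ):ℝ) = 0 := by push_cast; field_simp; ring
        have e2 : β*(((n:ℝ)+1)/β) - ((n:ℤ):ℝ) = 1 := by push_cast; field_simp; ring
        rw [e1, e2] at h
        exact h
      rw [h1] at hb
      have hsp := hsplit 0 ((n:ℝ)/β) (((n:ℝ)+1)/β) (by positivity)
        (by apply (div_le_div_iff_of_pos_right hβ0).mpr; linarith)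
      -- pass to reals
      have hbR : s * (m (Set.Ico ((n:ℝ)/β) (((n:ℝ)+1)/β))).toReal = 1 := by
        have := congrArg ENNReal.toReal hb
        rw [ENNReal.toReal_mul, ENNReal.toReal_ofReal hs.le] at this
        simpa using this.symm
      have hspR : cdf m (((n:ℝ)+1)/β)
          = cdf m ((n:ℝ)/β) + (m (Set.Ico ((n:ℝ)/β) (((n:ℝ)+1)/β))).toReal := by
        have := congrArg ENNReal.toReal hsp
        rw [ENNReal.toReal_add (hFin _) (hFin _)] at this
        simpa [cdf] using this
      push_cast
      rw [hspR]
      linear_combination ihn + hbR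
  have R1 : ∀ x : ℝ, 0 ≤ x → x < 1 →
      s * cdf m x = (⌊β*x⌋:ℝ) + cdf m (betaMap β x) := by
    intro x hx0 hx1
    set k := ⌊β*x⌋ with hkdef
    have hk0 : (0:ℤ) ≤ k := Int.floor_nonneg.mpr (by positivity)
    have hk0R : (0:ℝ) ≤ (k:ℝ) := by exact_mod_cast hk0
    have hbr := mem_branch hβ0 x
    have hkβ : (k:ℝ) ≤ β := by
      have h := Int.floor_le (β*x)
      nlinarith
    have h2 : m (Set.Ico (0:ℝ) (betaMap β x)) = ENNReal.ofReal s * m (Set.Ico ((k:ℝ)/β) x) := by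
      have h := hscale k ((k:ℝ)/β) x (by positivity) le_rfl hbr.2.le hx1.le
      have e1 : β*((k:ℝ)/β) - (k:ℝ) = 0 := by field_simp; ring
      rw [e1, ← betaMap_eq_of_branch hβ0 k hbr.1 hbr.2] at h
      exact h
    have hsp := hsplit 0 ((k:ℝ)/β) x (by positivity) hbr.1
    have hC : s * cdf m ((k:ℝ)/β) = (k:ℝ) := by
      have hcast : ((k.toNat : ℕ) : ℝ) = (k:ℝ) := by exact_mod_cast Int.toNat_of_nonneg hk0
      have h := claimNat k.toNat (by rw [hcast]; exact hkβ)
      rwa [hcast] at h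
    have e1 : cdf m x = cdf m ((k:ℝ)/β) + (m (Set.Ico ((k:ℝ)/β) x)).toReal := by
      have := congrArg ENNReal.toReal hsp
      rw [ENNReal.toReal_add (hFin _) (hFin _)] at this
      simpa [cdf] using this
    have e2 : cdf m (betaMap β x) = s * (m (Set.Ico ((k:ℝ)/β) x)).toReal := by
      have := congrArg ENNReal.toReal h2
      rw [ENNReal.toReal_mul, ENNReal.toReal_ofReal hs.le] at this
      simpa [cdf] using this
    rw [e1, e2]
    linarith [hC]
  have hβinv0 : (0:ℝ) ≤ 1/β := by positivity
  have hβinv1 : (1:ℝ)/β < 1 := by rw [div_lt_one hβ0]; exact hβ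
  have hβmul : β * (1/β) = 1 := by field_simp
  have hF1β : s * cdf m (1/β) = 1 := by
    have h := R1 (1/β) hβinv0 hβinv1
    rw [hβmul] at h
    have : betaMap β (1/β) = 0 := by rw [betaMap, hβmul]; exact Int.fract_one
    rw [this, hF0] at h
    simpa using h
  have hsge1 : 1 ≤ s := by
    have := mul_le_of_le_one_right hs.le (hFle1 (1/β))
    linarith
  have hslt : 1 < s := by
    rcases eq_or_lt_of_le hsge1 with hseq | h
    · exfalso
      have hs1 : s = 1 := hseq.symm
      have hFβ1 : cdf m (1/β) = 1 := by rw [hs1, one_mul] at hF1β; exact hF1β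
      have hpowF : ∀ n : ℕ, cdf m ((1/β)^(n+1)) = 1 := by
        intro n
        induction n with
        | zero => simpa using hFβ1
        | succ p ihp =>
          have hx0 : (0:ℝ) ≤ (1/β)^(p+2) := by positivity
          have hx1 : (1/β)^(p+2) < 1 := by
            apply pow_lt_one₀ hβinv0 hβinv1 (by omega)
          have hmul : β * (1/β)^(p+2) = (1/β)^(p+1) := by
            rw [pow_succ']
            rw [← mul_assoc, hβmul, one_mul]
          have hmem : (1/β)^(p+1) ∈ Set.Ico (0:ℝ) 1 :=
            ⟨by positivity, pow_lt_one₀ hβinv0 hβinv1 (by omega)⟩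
          have h := R1 ((1/β)^(p+2)) hx0 hx1
          rw [hmul] at h
          have hfl : ⌊(1/β:ℝ)^(p+1)⌋ = 0 := Int.floor_eq_zero_iff.mpr hmem
          have hfr : betaMap β ((1/β)^(p+2)) = (1/β)^(p+1) := by
            rw [betaMap, hmul]
            exact Int.fract_eq_self.mpr ⟨hmem.1, hmem.2⟩
          rw [hfl, hfr, hs1, one_mul, ihp] at h
          simpa using h
      have hmIco : ∀ n : ℕ, m (Set.Ico (0:ℝ) ((1/β)^(n+1))) = 1 := by
        intro n
        have h := hpowF n
        rw [← ENNReal.ofReal_toReal (hFin (Set.Ico (0:ℝ) ((1/β)^(n+1))))]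
        have : (m (Set.Ico (0:ℝ) ((1/β)^(n+1)))).toReal = 1 := h
        rw [this]
        simp
      have hanti : Antitone (fun n : ℕ => Set.Ico (0:ℝ) ((1/β)^(n+1))) := by
        intro i j hij
        apply Set.Ico_subset_Ico le_rfl
        exact pow_le_pow_of_le_one hβinv0 hβinv1.le (by omega)
      have hint : ⋂ n : ℕ, Set.Ico (0:ℝ) ((1/β)^(n+1)) = {(0:ℝ)} := by
        ext x
        simp only [Set.mem_iInter, Set.mem_Ico, Set.mem_singleton_iff]
        constructor
        · intro h
          have h0 := (h 0).1
          by_contra hne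
          have hpos : 0 < x := lt_of_le_of_ne h0 (Ne.symm hne)
          obtain ⟨n, hn⟩ := exists_pow_lt_of_lt_one hpos hβinv1
          have := (h n).2
          have h2 : (1/β:ℝ)^(n+1) ≤ (1/β)^n := pow_le_pow_of_le_one hβinv0 hβinv1.le (by omega)
          linarith
        · rintro rfl
          exact fun n => ⟨le_rfl, by positivity⟩
      have htend := tendsto_measure_iInter_atTop (μ := m)
        (fun n => measurableSet_Ico.nullMeasurableSet) hanti ⟨0, hFin _⟩
      rw [hint] at htend
      have htend2 : Filter.Tendsto (fun _ : ℕ => (1:ENNReal)) Filter.atTop (nhds (m ({0} : Set ℝ))) := by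
        have heq : (⇑m ∘ fun n : ℕ => Set.Ico (0:ℝ) ((1/β)^(n+1))) = fun _ : ℕ => (1:ENNReal) := by
          funext n; exact hmIco n
        rwa [heq] at htend
      have hm01 : m ({0} : Set ℝ) = 1 := tendsto_nhds_unique htend2 tendsto_const_nhds |>.symm.symm
      -- but also m {0} = 0
      have himg : betaMap β '' ({1/β} : Set ℝ) = {(0:ℝ)} := by
        rw [Set.image_singleton]
        congr 1
        rw [betaMap, hβmul]; exact Int.fract_one
      have happ := hm ({1/β} : Set ℝ) (by
          intro x hx
          rw [Set.mem_singleton_iff] at hx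
          subst hx
          exact ⟨hβinv0, hβinv1⟩)
        (measurableSet_singleton _) (Set.injOn_singleton _ _)
      rw [himg] at happ
      have hicoβ : m (Set.Ico (0:ℝ) (1/β)) = 1 := by
        rw [← ENNReal.ofReal_toReal (hFin (Set.Ico (0:ℝ) (1/β)))]
        have : (m (Set.Ico (0:ℝ) (1/β))).toReal = 1 := hFβ1
        rw [this]; simp
      have hico0 : m (Set.Ico (1/β:ℝ) 1) = 0 := by
        have hsp := hsplit 0 (1/β) 1 hβinv0 hβinv1.le
        rw [h1, hicoβ] at hsp
        have : (1:ENNReal) + 0 = 1 + m (Set.Ico (1/β:ℝ) 1) := by rw [add_zero]; exact hsp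
        exact ((ENNReal.add_right_inj ENNReal.one_ne_top).mp this).symm
      have hub : m ({1/β} : Set ℝ) ≤ m (Set.Ico (1/β:ℝ) 1) :=
        measure_mono (by rw [Set.singleton_subset_iff]; exact ⟨le_rfl, hβinv1⟩)
      rw [hico0, le_zero_iff] at hub
      rw [hub, mul_zero, hm01] at happ
      exact one_ne_zero happ
    · exact h
  have hfl_add : ∀ x : ℝ, (⌊β*x⌋:ℝ) + betaMap β x = β*x := by
    intro x; rw [betaMap]; exact Int.floor_add_fract _
  have hfl_nonneg : ∀ x : ℝ, 0 ≤ x → (0:ℝ) ≤ (⌊β*x⌋:ℝ) := by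
    intro x hx
    have : (0:ℤ) ≤ ⌊β*x⌋ := Int.floor_nonneg.mpr (by positivity)
    exact_mod_cast this
  have hC1 : β ≤ s → ∀ n : ℕ, ∀ x : ℝ, 0 ≤ x → x < 1 →
      cdf m x ≤ (β/s)*x + (1/s)^n := by
    intro hsb n
    induction n with
    | zero =>
      intro x hx0 hx1
      have h0 : (0:ℝ) ≤ (β/s)*x := by positivity
      have := hFle1 x
      simp only [pow_zero]
      linarith
    | succ n ih =>
      intro x hx0 hx1
      have hR := R1 x hx0 hx1
      have hτ := betaMap_mem_Ico β x
      have ihτ := ih (betaMap β x) hτ.1 hτ.2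
      have key : (β/s) * betaMap β x ≤ betaMap β x := by
        have hle1 : β/s ≤ 1 := (div_le_one hs).mpr hsb
        nlinarith [hτ.1]
      have hkey : s * cdf m x ≤ β*x + (1/s)^n := by
        have := hfl_add x
        linarith
      have e : (β/s)*x + (1/s)^(n+1) = (β*x + (1/s)^n)/s := by
        ring
      rw [e, le_div_iff₀ hs]
      linarith
  have hC2 : s ≤ β → ∀ n : ℕ, ∀ x : ℝ, 0 ≤ x → x < 1 →
      (β/s)*x - β*(1/s)^n ≤ cdf m x := by
    intro hsb n
    induction n with
    | zero =>
      intro x hx0 hx1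
      have h0 : (0:ℝ) ≤ β/s := by positivity
      have h2 : (β/s)*x ≤ β/s := by nlinarith
      have h3 : β/s ≤ β := div_le_self hβ0.le hsge1
      have := hFnonneg x
      simp only [pow_zero]
      linarith
    | succ n ih =>
      intro x hx0 hx1
      have hR := R1 x hx0 hx1
      have hτ := betaMap_mem_Ico β x
      have ihτ := ih (betaMap β x) hτ.1 hτ.2
      have key : betaMap β x ≤ (β/s) * betaMap β x := by
        have hge1 : 1 ≤ β/s := (one_le_div hs).mpr hsb
        nlinarith [hτ.1]
      have hkey : β*x - β*(1/s)^n ≤ s * cdf m x := by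
        have := hfl_add x
        linarith
      have e : (β/s)*x - β*(1/s)^(n+1) = (β*x - β*(1/s)^n)/s := by
        ring
      rw [e, div_le_iff₀ hs]
      linarith
  have hpow0 : Filter.Tendsto (fun n : ℕ => (1/s)^n) Filter.atTop (nhds 0) :=
    tendsto_pow_atTop_nhds_zero_of_lt_one (by positivity) (by rw [div_lt_one hs]; exact hslt)
  have hC1' : β ≤ s → ∀ x : ℝ, 0 ≤ x → x < 1 → cdf m x ≤ (β/s)*x := by
    intro hsb x hx0 hx1
    have ht : Filter.Tendsto (fun n : ℕ => (β/s)*x + (1/s)^n) Filter.atTop (nhds ((β/s)*x + 0)) :=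
      tendsto_const_nhds.add hpow0
    rw [add_zero] at ht
    exact ge_of_tendsto' ht (fun n => hC1 hsb n x hx0 hx1)
  have hC2' : s ≤ β → ∀ x : ℝ, 0 ≤ x → x < 1 → (β/s)*x ≤ cdf m x := by
    intro hsb x hx0 hx1
    have ht : Filter.Tendsto (fun n : ℕ => (β/s)*x - β*(1/s)^n) Filter.atTop
        (nhds ((β/s)*x - β*0)) := tendsto_const_nhds.sub (hpow0.const_mul β)
    rw [mul_zero, sub_zero] at ht
    exact le_of_tendsto' ht (fun n => hC2 hsb n x hx0 hx1)
  -- the sequence 1 - (1/2)^n tends to 1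
  have hhalf : ∀ n : ℕ, (0:ℝ) < (1/2:ℝ)^n ∧ (1/2:ℝ)^n ≤ 1 := by
    intro n
    exact ⟨by positivity, pow_le_one₀ (by norm_num) (by norm_num)⟩
  have hseqmem : ∀ n : ℕ, (0:ℝ) ≤ 1 - (1/2:ℝ)^n ∧ 1 - (1/2:ℝ)^n < 1 := by
    intro n
    have := hhalf n
    constructor <;> linarith [this.1, this.2]
  have hFlim : Filter.Tendsto (fun n : ℕ => cdf m (1 - (1/2:ℝ)^n)) Filter.atTop (nhds 1) := by
    have hmono : Monotone (fun n : ℕ => Set.Ico (0:ℝ) (1 - (1/2:ℝ)^n)) := by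
      intro i j hij
      apply Set.Ico_subset_Ico le_rfl
      have := pow_le_pow_of_le_one (by norm_num : (0:ℝ) ≤ 1/2) (by norm_num) hij
      linarith
    have hU : ⋃ n : ℕ, Set.Ico (0:ℝ) (1 - (1/2:ℝ)^n) = Set.Ico 0 1 := by
      ext x
      simp only [Set.mem_iUnion, Set.mem_Ico]
      constructor
      · rintro ⟨n, hx1, hx2⟩
        exact ⟨hx1, by linarith [(hhalf n).1]⟩
      · rintro ⟨hx1, hx2⟩
        obtain ⟨n, hn⟩ := exists_pow_lt_of_lt_one (by linarith : (0:ℝ) < 1 - x)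
          (by norm_num : (1/2:ℝ) < 1)
        exact ⟨n, hx1, by linarith⟩
    have ht := tendsto_measure_iUnion_atTop (μ := m) hmono
    rw [hU, h1] at ht
    have := (ENNReal.tendsto_toReal ENNReal.one_ne_top).comp ht
    exact this
  have hsβ : s = β := by
    rcases le_total β s with hsb | hsb
    · have hub : ∀ n : ℕ, cdf m (1 - (1/2:ℝ)^n) ≤ β/s := by
        intro n
        have hx := hseqmem n
        have h := hC1' hsb _ hx.1 hx.2
        have h0 : (0:ℝ) ≤ β/s := by positivity
        nlinarith [hx.1, hx.2]
      have h1le : (1:ℝ) ≤ β/s := le_of_tendsto hFlim (Filter.Eventually.of_forall hub)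
      have : s ≤ β := by
        rw [le_div_iff₀ hs] at h1le
        linarith
      linarith
    · have hub : ∀ n : ℕ, (β/s) * (1 - (1/2:ℝ)^n) ≤ 1 := by
        intro n
        have hx := hseqmem n
        exact le_trans (hC2' hsb _ hx.1 hx.2) (hFle1 _)
      have htt : Filter.Tendsto (fun n : ℕ => (β/s)*(1 - (1/2:ℝ)^n)) Filter.atTop
          (nhds ((β/s) * (1 - 0))) := by
        apply Filter.Tendsto.const_mul
        exact tendsto_const_nhds.sub
          (tendsto_pow_atTop_nhds_zero_of_lt_one (by norm_num) (by norm_num))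
      rw [sub_zero, mul_one] at htt
      have hle := le_of_tendsto htt (Filter.Eventually.of_forall hub)
      have : β ≤ s := by rwa [div_le_one hs] at hle
      linarith
  have hβss : β/s = 1 := by rw [hsβ]; exact div_self hβ0.ne'
  have hFx : ∀ x : ℝ, 0 ≤ x → x < 1 → cdf m x = x := by
    intro x hx0 hx1
    have h1' := hC1' (le_of_eq hsβ.symm) x hx0 hx1
    have h2' := hC2' (le_of_eq hsβ) x hx0 hx1
    rw [hβss, one_mul] at h1' h2'
    linarith
  have hIco0 : ∀ t : ℝ, 0 ≤ t → t ≤ 1 → m (Set.Ico (0:ℝ) t) = ENNReal.ofReal t := by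
    intro t h0 h1'
    rcases lt_or_eq_of_le h1' with hlt | heq
    · rw [← ENNReal.ofReal_toReal (hFin (Set.Ico (0:ℝ) t))]
      have : (m (Set.Ico (0:ℝ) t)).toReal = t := hFx t h0 hlt
      rw [this]
    · rw [heq, h1]
      simp
  have hIco : ∀ c d : ℝ, 0 ≤ c → c ≤ d → d ≤ 1 →
      m (Set.Ico c d) = ENNReal.ofReal (d - c) := by
    intro c d h0 hcd h1'
    have hsp := hsplit 0 c d h0 hcd
    rw [hIco0 c h0 (hcd.trans h1'), hIco0 d (h0.trans hcd) h1'] at hsp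
    have heq : ENNReal.ofReal c + ENNReal.ofReal (d - c)
        = ENNReal.ofReal c + m (Set.Ico c d) := by
      rw [← hsp, ← ENNReal.ofReal_add h0 (by linarith)]
      congr 1
      ring
    exact ((ENNReal.add_right_inj ENNReal.ofReal_ne_top).mp heq).symm
  -- conclusion via extensionality on Ico intervals
  refine MeasureTheory.Measure.ext_of_Ico_finite m _ ?_ ?_
  · rw [Measure.restrict_apply_univ, Real.volume_Ico, measure_univ]
    norm_num
  · intro a b hab
    have hrhs : (volume.restrict (Set.Ico (0:ℝ) 1)) (Set.Ico a b)
        = volume (Set.Ico (a ⊔ 0) (b ⊓ 1)) := by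
      rw [Measure.restrict_apply measurableSet_Ico, Set.Ico_inter_Ico]
    have hcompl : m ((Set.Ico (0:ℝ) 1)ᶜ) = 0 := by
      have hc := measure_compl (μ := m) (measurableSet_Ico (a := (0:ℝ)) (b := 1)) (hFin _)
      rw [h1, measure_univ] at hc
      simpa using hc
    have hlhs : m (Set.Ico a b) = m (Set.Ico (a ⊔ 0) (b ⊓ 1)) := by
      have h2 : m (Set.Ico a b) = m (Set.Ico a b ∩ Set.Ico (0:ℝ) 1) := by
        apply le_antisymm
        · calc m (Set.Ico a b)
              ≤ m (Set.Ico a b ∩ Set.Ico (0:ℝ) 1) + m (Set.Ico a b \ Set.Ico (0:ℝ) 1) :=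
                measure_le_inter_add_diff m _ _
            _ ≤ m (Set.Ico a b ∩ Set.Ico (0:ℝ) 1) + 0 := by
                gcongr
                calc m (Set.Ico a b \ Set.Ico (0:ℝ) 1) ≤ m ((Set.Ico (0:ℝ) 1)ᶜ) :=
                    measure_mono (Set.diff_subset_compl _ _)
                  _ = 0 := hcompl
            _ = m (Set.Ico a b ∩ Set.Ico (0:ℝ) 1) := add_zero _
        · exact measure_mono Set.inter_subset_left
      rw [h2, Set.Ico_inter_Ico]
    rw [hlhs, hrhs]
    rcases le_or_gt (b ⊓ 1) (a ⊔ 0) with hba | hab2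
    · rw [Set.Ico_eq_empty (not_lt.mpr hba)]
      simp
    · rw [hIco _ _ le_sup_right hab2.le inf_le_right, Real.volume_Ico]

end Uniqueness

/-- The measure `m` on `[0,1)` is scaled by `τ` by the factor `s`. -/
def ScaledByIco (τ : ℝ → ℝ) (m : Measure ℝ) (s : ℝ) : Prop :=
  ∀ E : Set ℝ, E ⊆ Set.Ico (0 : ℝ) 1 → MeasurableSet E → Set.InjOn τ E →
    m (τ '' E) = ENNReal.ofReal s * m E

/-- For every `β > 1`, Lebesgue measure on `[0,1)` is scaled by the
β-transformation by the factor `β`, and it is the unique Borel probability measure on `[0,1)`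
scaled by the β-transformation by some factor `s > 0`. -/
theorem stmt14 (β : ℝ) (hβ : 1 < β) :
    ScaledByIco (betaMap β) (volume.restrict (Set.Ico (0 : ℝ) 1)) β ∧
    ∀ (m : Measure ℝ) (s : ℝ), 0 < s → IsProbabilityMeasure m →
      m (Set.Ico (0 : ℝ) 1) = 1 → ScaledByIco (betaMap β) m s →
      m = volume.restrict (Set.Ico (0 : ℝ) 1) := by
  constructor
  · exact lebesgue_scaled hβ
  · intro m s hs hprob h1 hsc
    haveI := hprob
    exact scaled_unique hβ m s hs h1 hsc
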